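/- The constant 2 in the fattening lemma is best possible: for every b with 0 < b < 2 there exist a graph G with at least one edge and a real number η with 0 < η ≤ 1 such that every η-fat partition 𝒜 of V(G) satisfies q_𝒜(G) ≤ q*(G) − b·η. (Explicitly, one may take G to be a disjoint union of k triangles for a sufficiently large odd integer k, and η with 1/2 − 1/(6k) < η and 1 − 1/k > b·η; then the only η-fat partition is the trivial one-part partition, whose modularity score is 0, while q*(G) = 1 − 1/k.) -/

import Mathlib

open Finset
open scoped Classical

/-- The number of edges of a finite graph. -/
noncomputable def edgeCount {V : Type} [Fintype V] [DecidableEq V] (G : SimpleGraph V) : ℕ :=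
  G.edgeFinset.card

/-- vol(A): the sum over vertices of A of their degree in G. -/
noncomputable def degSum {V : Type} [Fintype V] [DecidableEq V] (G : SimpleGraph V)
    (A : Finset V) : ℕ :=
  ∑ v ∈ A, G.degree v

/-- e(A): the number of edges of G with both endpoints in A. -/
noncomputable def intEdges {V : Type} [Fintype V] [DecidableEq V] (G : SimpleGraph V)
    (A : Finset V) : ℕ :=
  (G.edgeFinset.filter (fun e => ∀ v ∈ e, v ∈ A)).card

/-- The modularity score q_𝒜(G) of a vertex partition 𝒜 of G; it is 0 if G has no edges. -/
noncomputable def modScore {V : Type} [Fintype V] [DecidableEq V] (G : SimpleGraph V)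
    (P : Finpartition (univ : Finset V)) : ℝ :=
  if edgeCount G = 0 then 0 else
    (∑ A ∈ P.parts, (intEdges G A : ℝ)) / (edgeCount G : ℝ)
      - (∑ A ∈ P.parts, (degSum G A : ℝ) ^ 2) / (4 * (edgeCount G : ℝ) ^ 2)

/-- The modularity q*(G) of a graph: the maximum of q_𝒜(G) over all vertex partitions 𝒜. -/
noncomputable def modularity {V : Type} [Fintype V] [DecidableEq V] (G : SimpleGraph V) : ℝ :=
  ⨆ P : Finpartition (univ : Finset V), modScore G P

/-- The probability that the random subgraph G_p of G (each edge of G retained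
independently with probability p) satisfies the predicate Q. -/
noncomputable def subgraphProb {V : Type} [Fintype V] [DecidableEq V] (G : SimpleGraph V)
    (p : ℝ) (Q : SimpleGraph V → Prop) : ℝ :=
  ∑ F ∈ G.edgeFinset.powerset,
    if Q (SimpleGraph.fromEdgeSet (F : Set (Sym2 V))) then
      p ^ F.card * (1 - p) ^ (G.edgeFinset.card - F.card)
    else 0

/-! ### Auxiliary development: a perfect matching on `Fin (2*k)` -/

/-- The perfect matching graph on `Fin (2*k)`: `i ~ j` iff they lie in the same pair. -/
def pairG (k : ℕ) : SimpleGraph (Fin (2 * k)) where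
  Adj i j := i ≠ j ∧ (i : ℕ) / 2 = (j : ℕ) / 2
  symm := ⟨fun i j ⟨h1, h2⟩ => ⟨h1.symm, h2.symm⟩⟩
  loopless := ⟨fun i h => h.1 rfl⟩

lemma pairG_adj {k : ℕ} {i j : Fin (2 * k)} :
    (pairG k).Adj i j ↔ i ≠ j ∧ (i : ℕ) / 2 = (j : ℕ) / 2 := Iff.rfl

/-- The unique neighbor of a vertex in `pairG k`. -/
def partner {k : ℕ} (v : Fin (2 * k)) : Fin (2 * k) :=
  ⟨if (v : ℕ) % 2 = 0 then (v : ℕ) + 1 else (v : ℕ) - 1, by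
    have := v.isLt; split_ifs <;> omega⟩

lemma pairG_neighborFinset {k : ℕ} (v : Fin (2 * k)) :
    (pairG k).neighborFinset v = {partner v} := by
  ext w
  simp only [SimpleGraph.mem_neighborFinset, mem_singleton, pairG_adj]
  constructor
  · rintro ⟨h1, h2⟩
    have h1' : (v : ℕ) ≠ (w : ℕ) := fun h => h1 (Fin.ext h)
    apply Fin.ext
    simp only [partner]
    split_ifs <;> omega
  · rintro rfl
    have hlt := v.isLt
    constructor
    · intro h
      have := congrArg Fin.val h
      simp only [partner] at this
      split_ifs at this <;> omega
    · simp only [partner]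
      split_ifs <;> omega

lemma pairG_degree {k : ℕ} (v : Fin (2 * k)) : (pairG k).degree v = 1 := by
  rw [← SimpleGraph.card_neighborFinset_eq_degree, pairG_neighborFinset]
  simp

lemma pairG_edgeCount {k : ℕ} : edgeCount (pairG k) = k := by
  have h := SimpleGraph.sum_degrees_eq_twice_card_edges (pairG k)
  simp only [pairG_degree, Finset.sum_const, smul_eq_mul, mul_one,
    Finset.card_univ, Fintype.card_fin] at h
  have : edgeCount (pairG k) = (pairG k).edgeFinset.card := by
    unfold edgeCount; congr 1
  omega

lemma degSum_eq_card {k : ℕ} (A : Finset (Fin (2 * k))) :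
    degSum (pairG k) A = A.card := by
  unfold degSum
  simp [pairG_degree]

lemma degSum_univ {V : Type} [Fintype V] [DecidableEq V] (G : SimpleGraph V) :
    degSum G univ = 2 * edgeCount G := by
  unfold degSum edgeCount
  rw [SimpleGraph.sum_degrees_eq_twice_card_edges]

lemma intEdges_univ {V : Type} [Fintype V] [DecidableEq V] (G : SimpleGraph V) :
    intEdges G univ = edgeCount G := by
  unfold intEdges edgeCount
  congr 1
  apply Finset.filter_true_of_mem
  intro e _
  intro v _
  exact mem_univ v

/-- The filtered edge sets of distinct parts are disjoint, so the total number of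
internal edges is at most the number of edges. -/
lemma sum_intEdges_le {V : Type} [Fintype V] [DecidableEq V] (G : SimpleGraph V)
    (P : Finpartition (univ : Finset V)) :
    ∑ A ∈ P.parts, intEdges G A ≤ edgeCount G := by
  classical
  unfold intEdges edgeCount
  rw [← Finset.card_biUnion]
  · exact Finset.card_le_card (Finset.biUnion_subset.2 fun A _ => Finset.filter_subset _ _)
  · intro A hA B hB hAB
    simp only [Function.onFun]
    rw [Finset.disjoint_left]
    intro e heA heB
    rw [Finset.mem_filter] at heA heB
    have ha : e.out.1 ∈ A := heA.2 _ (Sym2.out_fst_mem e)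
    have hb : e.out.1 ∈ B := heB.2 _ (Sym2.out_fst_mem e)
    exact hAB (P.eq_of_mem_parts hA hB ha hb)

lemma modScore_le_one {V : Type} [Fintype V] [DecidableEq V] (G : SimpleGraph V)
    (P : Finpartition (univ : Finset V)) : modScore G P ≤ 1 := by
  unfold modScore
  split_ifs with h
  · norm_num
  · have hm : (0 : ℝ) < (edgeCount G : ℝ) := by positivity
    have h1 : (∑ A ∈ P.parts, (intEdges G A : ℝ)) / (edgeCount G : ℝ) ≤ 1 := by
      rw [div_le_one hm]
      rw [← Nat.cast_sum]
      exact_mod_cast sum_intEdges_le G P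
    have h2 : (0 : ℝ) ≤ (∑ A ∈ P.parts, (degSum G A : ℝ) ^ 2) / (4 * (edgeCount G : ℝ) ^ 2) := by
      positivity
    linarith

lemma modScore_le_modularity {V : Type} [Fintype V] [DecidableEq V] (G : SimpleGraph V)
    (P : Finpartition (univ : Finset V)) : modScore G P ≤ modularity G := by
  apply le_ciSup (f := fun P => modScore G P)
  exact ⟨1, Set.forall_mem_range.2 fun P => modScore_le_one G P⟩

/-- Sum of degree-sums over the parts equals the degree sum of the whole vertex set. -/
lemma sum_degSum_parts {V : Type} [Fintype V] [DecidableEq V] (G : SimpleGraph V)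
    (P : Finpartition (univ : Finset V)) :
    ∑ A ∈ P.parts, degSum G A = degSum G univ := by
  unfold degSum
  have h : ∑ v ∈ P.parts.biUnion id, G.degree v = ∑ A ∈ P.parts, ∑ v ∈ id A, G.degree v :=
    Finset.sum_biUnion P.supIndep.pairwiseDisjoint
  simp only [id] at h
  rw [← h, ← Finset.sup_eq_biUnion, P.sup_parts]

/-- The pair `{2t, 2t+1}` as a finset of `Fin (2*k)`. -/
def pairPart (k : ℕ) (t : Fin k) : Finset (Fin (2 * k)) :=
  {⟨2 * t, by have := t.isLt; omega⟩, ⟨2 * t + 1, by have := t.isLt; omega⟩}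

lemma mem_pairPart {k : ℕ} {t : Fin k} {v : Fin (2 * k)} :
    v ∈ pairPart k t ↔ (v : ℕ) / 2 = (t : ℕ) := by
  simp only [pairPart, mem_insert, mem_singleton, Fin.ext_iff]
  omega

lemma pairPart_card {k : ℕ} (t : Fin k) : (pairPart k t).card = 2 := by
  rw [pairPart, Finset.card_insert_of_notMem, Finset.card_singleton]
  simp [Fin.ext_iff]

/-- The partition of `Fin (2*k)` into pairs. -/
noncomputable def pairP (k : ℕ) : Finpartition (univ : Finset (Fin (2 * k))) where
  parts := univ.image (pairPart k)
  supIndep := by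
    rw [Finset.supIndep_iff_pairwiseDisjoint]
    rintro A hA B hB hAB
    simp only [coe_image, Set.mem_image, mem_coe] at hA hB
    obtain ⟨t, -, rfl⟩ := hA
    obtain ⟨u, -, rfl⟩ := hB
    simp only [Function.onFun, id]
    rw [Finset.disjoint_left]
    intro v hv hv'
    rw [mem_pairPart] at hv hv'
    have htu : t = u := Fin.ext (by omega)
    exact hAB (htu ▸ rfl)
  sup_parts := by
    ext v
    simp only [Finset.mem_sup, mem_image, mem_univ, true_and, iff_true, id]
    refine ⟨pairPart k ⟨(v : ℕ) / 2, by have := v.isLt; omega⟩, ⟨_, rfl⟩, ?_⟩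
    rw [mem_pairPart]
  bot_notMem := by
    simp only [bot_eq_empty, mem_image, mem_univ, true_and, not_exists]
    intro t h
    have : (⟨2 * t, by have := t.isLt; omega⟩ : Fin (2 * k)) ∈ pairPart k t := by
      rw [mem_pairPart]; show 2 * (t : ℕ) / 2 = (t : ℕ); omega
    rw [h] at this
    exact absurd this (Finset.notMem_empty _)

lemma pairPart_injective (k : ℕ) : Function.Injective (pairPart k) := by
  intro t u h
  have : (⟨2 * t, by have := t.isLt; omega⟩ : Fin (2 * k)) ∈ pairPart k u := by
    rw [← h, mem_pairPart]; show 2 * (t : ℕ) / 2 = (t : ℕ); omega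
  rw [mem_pairPart] at this
  have h2 : 2 * (t : ℕ) / 2 = (u : ℕ) := this
  exact Fin.ext (by omega)

lemma pairP_parts_card (k : ℕ) : (pairP k).parts.card = k := by
  show (univ.image (pairPart k)).card = k
  rw [Finset.card_image_of_injective _ (pairPart_injective k)]
  simp

lemma intEdges_pairPart {k : ℕ} (t : Fin k) :
    1 ≤ intEdges (pairG k) (pairPart k t) := by
  rw [Nat.one_le_iff_ne_zero, ← Nat.pos_iff_ne_zero, intEdges, Finset.card_pos]
  refine ⟨s(⟨2 * t, by have := t.isLt; omega⟩, ⟨2 * t + 1, by have := t.isLt; omega⟩), ?_⟩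
  simp only [Finset.mem_filter]
  constructor
  · rw [SimpleGraph.mem_edgeFinset, SimpleGraph.mem_edgeSet, pairG_adj]
    refine ⟨?_, ?_⟩
    · intro hcon
      have := congrArg Fin.val hcon
      simp only at this
      omega
    · show 2 * (t : ℕ) / 2 = (2 * (t : ℕ) + 1) / 2; omega
  · intro v hv
    rw [Sym2.mem_iff] at hv
    rcases hv with rfl | rfl <;>
      (rw [mem_pairPart]; first
        | (show 2 * (t : ℕ) / 2 = (t : ℕ); omega)
        | (show (2 * (t : ℕ) + 1) / 2 = (t : ℕ); omega))

lemma modScore_pairP {k : ℕ} (hk : 0 < k) :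
    1 - 1 / (k : ℝ) ≤ modScore (pairG k) (pairP k) := by
  have hm : edgeCount (pairG k) = k := pairG_edgeCount
  have hk' : (0 : ℝ) < (k : ℝ) := by exact_mod_cast hk
  rw [modScore, if_neg (by omega), hm]
  have h1 : (k : ℝ) ≤ ∑ A ∈ (pairP k).parts, (intEdges (pairG k) A : ℝ) := by
    calc (k : ℝ) = ∑ A ∈ (pairP k).parts, (1 : ℝ) := by
          rw [Finset.sum_const, pairP_parts_card]; simp
      _ ≤ _ := by
          apply Finset.sum_le_sum
          intro A hA
          have : A ∈ univ.image (pairPart k) := hA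
          rw [mem_image] at this
          obtain ⟨t, -, rfl⟩ := this
          exact_mod_cast intEdges_pairPart t
  have h2 : ∑ A ∈ (pairP k).parts, (degSum (pairG k) A : ℝ) ^ 2 = 4 * k := by
    calc ∑ A ∈ (pairP k).parts, (degSum (pairG k) A : ℝ) ^ 2
        = ∑ A ∈ (pairP k).parts, (4 : ℝ) := by
          apply Finset.sum_congr rfl
          intro A hA
          have : A ∈ univ.image (pairPart k) := hA
          rw [mem_image] at this
          obtain ⟨t, -, rfl⟩ := this
          rw [degSum_eq_card, pairPart_card]
          norm_num
      _ = 4 * k := by rw [Finset.sum_const, pairP_parts_card]; push_cast; ring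
  rw [h2]
  have h3 : (1 : ℝ) ≤ (∑ A ∈ (pairP k).parts, (intEdges (pairG k) A : ℝ)) / k := by
    rw [le_div_iff₀ hk']; linarith
  have h4 : 4 * (k : ℝ) / (4 * (k : ℝ) ^ 2) = 1 / k := by
    field_simp
  rw [h4]
  linarith

theorem statement6 (b : ℝ) (hb0 : 0 < b) (hb2 : b < 2) :
    ∃ (n : ℕ) (G : SimpleGraph (Fin n)) (η : ℝ),
      0 < edgeCount G ∧ 0 < η ∧ η ≤ 1 ∧
      ∀ A : Finpartition (univ : Finset (Fin n)),
        (∀ s ∈ A.parts, η * (2 * (edgeCount G : ℝ)) ≤ (degSum G s : ℝ)) →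
        modScore G A ≤ modularity G - b * η := by
  have h2b : 0 < 2 - b := by linarith
  set δ : ℝ := min ((2 - b) / (4 * b)) (1 / 2) with hδdef
  have hδ0 : 0 < δ := lt_min (by positivity) (by norm_num)
  have hδhalf : δ ≤ 1 / 2 := min_le_right _ _
  set η : ℝ := 1 / 2 + δ with hηdef
  set k : ℕ := ⌈4 / (2 - b)⌉₊ + 1 with hkdef
  clear_value δ η k
  have hk0 : 0 < k := by rw [hkdef]; omega
  have hk' : (0 : ℝ) < (k : ℝ) := by exact_mod_cast hk0
  have hkge : 4 / (2 - b) ≤ (k : ℝ) := by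
    have h1 := Nat.le_ceil (4 / (2 - b))
    have h2 : ((⌈4 / (2 - b)⌉₊ : ℝ)) ≤ (k : ℝ) := by
      rw [hkdef]; push_cast; linarith
    linarith
  have hik : 1 / (k : ℝ) ≤ (2 - b) / 4 := by
    rw [div_le_div_iff₀ hk' (by norm_num : (0:ℝ) < 4)]
    have h4 : 4 ≤ (2 - b) * (k : ℝ) := by
      rw [div_le_iff₀ h2b] at hkge
      linarith [hkge]
    linarith
  have hbη : b * η ≤ 1 - 1 / (k : ℝ) := by
    have hbd : b * δ ≤ (2 - b) / 4 := by
      calc b * δ ≤ b * ((2 - b) / (4 * b)) :=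
            mul_le_mul_of_nonneg_left (hδdef ▸ min_le_left _ _) hb0.le
        _ = (2 - b) / 4 := by field_simp
    have hbe : b * η = b / 2 + b * δ := by rw [hηdef]; ring
    linarith
  have hm : edgeCount (pairG k) = k := pairG_edgeCount
  have hη0 : 0 < η := by rw [hηdef]; linarith
  have hη1' : η ≤ 1 := by rw [hηdef]; linarith
  refine ⟨2 * k, pairG k, η, ?_, hη0, hη1', ?_⟩
  · rw [hm]; exact hk0
  · intro A hfat
    have huniv_ne : (univ : Finset (Fin (2 * k))) ≠ ⊥ := by
      rw [bot_eq_empty]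
      refine Finset.nonempty_iff_ne_empty.mp ⟨⟨0, by omega⟩, mem_univ _⟩
    obtain ⟨s, hs⟩ := A.parts_nonempty huniv_ne
    have hone : ∀ t ∈ A.parts, t = s := by
      intro t ht
      by_contra hts
      have hsub : {s, t} ⊆ A.parts := by
        intro x hx
        rw [Finset.mem_insert, Finset.mem_singleton] at hx
        rcases hx with rfl | rfl <;> assumption
      have hsum : ∑ u ∈ A.parts, degSum (pairG k) u = 2 * k := by
        rw [sum_degSum_parts, degSum_univ, hm]
      have hle : ∑ u ∈ ({s, t} : Finset (Finset (Fin (2 * k)))), degSum (pairG k) u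
          ≤ ∑ u ∈ A.parts, degSum (pairG k) u :=
        Finset.sum_le_sum_of_subset hsub
      rw [Finset.sum_insert (by simp [Ne.symm hts]), Finset.sum_singleton] at hle
      have hfs := hfat s hs
      have hft := hfat t ht
      rw [hm] at hfs hft
      have hη1 : (1 : ℝ) < 2 * η := by linarith
      have hcast : (degSum (pairG k) s : ℝ) + (degSum (pairG k) t : ℝ) ≤ 2 * (k : ℝ) := by
        have : (degSum (pairG k) s + degSum (pairG k) t : ℕ) ≤ 2 * k := by omega
        exact_mod_cast this
      nlinarith
    have hparts : A.parts = {univ} := by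
      have hseq : A.parts = {s} := Finset.eq_singleton_iff_unique_mem.mpr ⟨hs, hone⟩
      have hsu : s = univ := by
        have := A.sup_parts
        rw [hseq] at this
        simpa using this
      rw [hseq, hsu]
    have hscore : modScore (pairG k) A = 0 := by
      rw [modScore, if_neg (by rw [hm]; omega), hparts]
      simp only [Finset.sum_singleton]
      rw [intEdges_univ, degSum_univ, hm]
      push_cast
      field_simp
      ring
    have hstar := modScore_pairP hk0
    have hmod := modScore_le_modularity (pairG k) (pairP k)
    rw [hscore]
    linarith
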